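/- Let π = dom(λ) be dominant and w ≤_L π. For a pipe dream P ∈ PD(w), define the set of π-dominated positions P(π) = {p ∈ ℕ² : row(p) ≤ λ'_{π(w⁻¹(s_p))}}, where s_p is the label of the pipe exiting position p to the south. Then P(π) contains exactly λ_i positions in each row i ≥ 1. -/

import Mathlib

open Equiv MvPolynomial

/-- A permutation of ℕ has finite support. -/
def FinSupp (w : Equiv.Perm ℕ) : Prop := {i | w i ≠ i}.Finite

/-- Inversion set Inv(w) = {(i,j) : i < j, w i > w j}. -/
def invSet (w : Equiv.Perm ℕ) : Set (ℕ × ℕ) := {p | p.1 < p.2 ∧ w p.2 < w p.1}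

/-- Co-inversion set coInv(w) = {(i,j) : i < j, w i < w j}. -/
def coinvSet (w : Equiv.Perm ℕ) : Set (ℕ × ℕ) := {p | p.1 < p.2 ∧ w p.1 < w p.2}

/-- Coxeter length ℓ(w) = |Inv(w)|. -/
noncomputable def len (w : Equiv.Perm ℕ) : ℕ := (invSet w).ncard

/-- Cover relation of left weak order: u = s_k * w with ℓ(u) = ℓ(w) + 1. -/
def WeakCover (w u : Equiv.Perm ℕ) : Prop :=
  ∃ k, u = Equiv.swap k (k + 1) * w ∧ len u = len w + 1

/-- Left weak order: reflexive-transitive closure of weak covers. -/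
def leL (w u : Equiv.Perm ℕ) : Prop := Relation.ReflTransGen WeakCover w u

/-- π avoids the pattern 132 (π is dominant). -/
def Avoids132 (π : Equiv.Perm ℕ) : Prop :=
  ¬ ∃ a b c : ℕ, a < b ∧ b < c ∧ π a < π c ∧ π c < π b

/-- Rothe diagram D(π) (0-indexed conventions). -/
def Rothe (π : Equiv.Perm ℕ) : Set (ℕ × ℕ) := {p | p.1 < π⁻¹ p.2 ∧ p.2 < π p.1}

/-- Young diagram of a partition (0-indexed): row i has l i cells. -/
def yd (l : ℕ → ℕ) : Set (ℕ × ℕ) := {p | p.2 < l p.1}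

/-- Conjugate partition (0-indexed): column j has |{i : l i > j}| cells. -/
noncomputable def conjPart (l : ℕ → ℕ) (j : ℕ) : ℕ := {i | j < l i}.ncard

/-- A pipe dream: a finite set of crossing tiles together with the (uniquely
determined) labels of the pipes on the four edges of each tile.  At a cross
tile the pipes pass straight through; at a bump tile the pipe from the north
exits west and the pipe from the east exits south.  Pipe j enters the quadrant
at the north edge of column j. -/
structure PipeDream where
  cross : Finset (ℕ × ℕ)
  north : ℕ × ℕ → ℕ
  east : ℕ × ℕ → ℕ
  south : ℕ × ℕ → ℕ
  west : ℕ × ℕ → ℕ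
  north_top : ∀ j, north (0, j) = j
  north_succ : ∀ i j, north (i + 1, j) = south (i, j)
  east_eq : ∀ i j, east (i, j) = west (i, j + 1)
  south_cross : ∀ p ∈ cross, south p = north p
  west_cross : ∀ p ∈ cross, west p = east p
  south_bump : ∀ p, p ∉ cross → south p = east p
  west_bump : ∀ p, p ∉ cross → west p = north p

namespace PipeDream

/-- Pipes a and b cross at position p. -/
def CrossAt (P : PipeDream) (a b : ℕ) (p : ℕ × ℕ) : Prop :=
  p ∈ P.cross ∧ ({P.north p, P.east p} : Set ℕ) = {a, b}

/-- A pipe dream is reduced if no two pipes cross more than once. -/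
def Reduced (P : PipeDream) : Prop :=
  ∀ a b p q, P.CrossAt a b p → P.CrossAt a b q → p = q

/-- P is a pipe dream for the permutation w: pipe a exits on the west edge at
row w⁻¹(a), i.e. the one-line notation read along the west edge is w. -/
def IsFor (P : PipeDream) (w : Equiv.Perm ℕ) : Prop := ∀ i, P.west (i, 0) = w i

/-- Pipe k passes through the tile p. -/
def OnPipe (P : PipeDream) (k : ℕ) (p : ℕ × ℕ) : Prop := P.north p = k ∨ P.east p = k

/-- p lies weakly northwest of pipe k. -/
def NWOfPipe (P : PipeDream) (k : ℕ) (p : ℕ × ℕ) : Prop :=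
  ∃ q, P.OnPipe k q ∧ p.1 ≤ q.1 ∧ p.2 ≤ q.2

end PipeDream

/-- The set of reduced pipe dreams for w. -/
def PD (w : Equiv.Perm ℕ) : Set PipeDream := {P | P.Reduced ∧ P.IsFor w}

/-- The set of π-dominated positions of a pipe dream P ∈ PD(w), where π is the
dominant permutation with Rothe diagram the Young diagram of l:
row(p) < λ'(π(w⁻¹(s_p))) (0-indexed), s_p being the pipe exiting p south. -/
noncomputable def dominated (π : Equiv.Perm ℕ) (l : ℕ → ℕ) (w : Equiv.Perm ℕ)
    (P : PipeDream) : Set (ℕ × ℕ) :=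
  {p | p.1 < conjPart l (π (w⁻¹ (P.south p)))}

/-- The Schubert polynomial as the pipe dream generating function. -/
noncomputable def Schub (w : Equiv.Perm ℕ) : MvPolynomial ℕ ℤ :=
  ∑ᶠ P ∈ PD w, ∏ p ∈ P.cross, X p.1

/-- The polynomial ring ℤ[x;y]: x-variables are `Sum.inl i`, y-variables `Sum.inr i`. -/
abbrev PolyXY := MvPolynomial (ℕ ⊕ ℕ) ℤ

/-- The field of rational functions in the x- and y-variables. -/
noncomputable abbrev RatXY := FractionRing PolyXY

noncomputable def Xv (i : ℕ) : RatXY := algebraMap PolyXY RatXY (X (Sum.inl i))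
noncomputable def Yv (i : ℕ) : RatXY := algebraMap PolyXY RatXY (X (Sum.inr i))

/-- The π-padded Schubert polynomial 𝔖_w^π(x;y) = y^λ · 𝔖_w(x₁/y₁, x₂/y₂, …),
viewed in the field of rational functions. -/
noncomputable def padded (l : ℕ → ℕ) (w : Equiv.Perm ℕ) : RatXY :=
  (∏ᶠ i, Yv i ^ l i) * (aeval (fun i => Xv i / Yv i) (Schub w))

/-- Δ = Σ_i x_i ∂/∂y_i. -/
noncomputable def deltaOp (f : PolyXY) : PolyXY :=
  ∑ᶠ i : ℕ, X (Sum.inl i) * pderiv (Sum.inr i) f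

/-- ∇ = Σ_i y_i ∂/∂x_i. -/
noncomputable def nablaOp (f : PolyXY) : PolyXY :=
  ∑ᶠ i : ℕ, X (Sum.inr i) * pderiv (Sum.inl i) f

namespace Aux

variable (P : PipeDream)

lemma exists_noncross (i j : ℕ) : ∃ m, j ≤ m ∧ (i, m) ∉ P.cross := by
  by_contra h
  push_neg at h
  have hsub : Set.Ici j ⊆ (fun m => ((i, m) : ℕ × ℕ)) ⁻¹' ↑P.cross := fun m hm => h m hm
  have hfin : ((fun m => ((i, m) : ℕ × ℕ)) ⁻¹' ↑P.cross).Finite :=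
    Set.Finite.preimage (Function.Injective.injOn (fun a b hab => by simpa using hab))
      P.cross.finite_toSet
  exact (Set.Ici_infinite j) (hfin.subset hsub)

open scoped Classical in
noncomputable def nb (i j : ℕ) : ℕ := Nat.find (exists_noncross P i j)

lemma nb_ge (i j : ℕ) : j ≤ nb P i j := by
  classical exact (Nat.find_spec (exists_noncross P i j)).1

lemma nb_noncross (i j : ℕ) : (i, nb P i j) ∉ P.cross := by
  classical exact (Nat.find_spec (exists_noncross P i j)).2

lemma nb_min (i j m : ℕ) (hm : j ≤ m) (hc : (i, m) ∉ P.cross) : nb P i j ≤ m := by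
  classical exact Nat.find_min' (exists_noncross P i j) ⟨hm, hc⟩

lemma nb_eq_self (i j : ℕ) (hc : (i, j) ∉ P.cross) : nb P i j = j :=
  le_antisymm (nb_min P i j j le_rfl hc) (nb_ge P i j)

lemma nb_cross_step (i j : ℕ) (hc : (i, j) ∈ P.cross) : nb P i j = nb P i (j + 1) := by
  refine le_antisymm (nb_min P i j _ (le_trans (Nat.le_succ j) (nb_ge P i (j+1)))
    (nb_noncross P i (j+1))) (nb_min P i (j+1) _ ?_ (nb_noncross P i j))
  rcases Nat.lt_or_ge j (nb P i j) with h | h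
  · omega
  · have hje : nb P i j = j := le_antisymm h (nb_ge P i j)
    have hnc := nb_noncross P i j
    rw [hje] at hnc
    exact absurd hc hnc

lemma west_aux (i d : ℕ) : ∀ j, nb P i j ≤ j + d → P.west (i, j) = P.north (i, nb P i j) := by
  induction d with
  | zero =>
    intro j h
    have he : nb P i j = j := le_antisymm (by omega) (nb_ge P i j)
    have hc : (i, j) ∉ P.cross := he ▸ nb_noncross P i j
    rw [P.west_bump _ hc, he]
  | succ d ih =>
    intro j h
    by_cases hc : (i, j) ∈ P.cross
    · have hstep := nb_cross_step P i j hc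
      rw [P.west_cross _ hc, P.east_eq, ih (j + 1) (by omega), ← hstep]
    · have he : nb P i j = j := nb_eq_self P i j hc
      rw [P.west_bump _ hc, he]

lemma west_eq (i j : ℕ) : P.west (i, j) = P.north (i, nb P i j) :=
  west_aux P i (nb P i j - j) j (by omega)

noncomputable def sig (i j : ℕ) : ℕ := if (i, j) ∈ P.cross then j else nb P i (j + 1)

lemma south_eq (i j : ℕ) : P.south (i, j) = P.north (i, sig P i j) := by
  unfold sig
  by_cases hc : (i, j) ∈ P.cross
  · rw [if_pos hc, P.south_cross _ hc]
  · rw [if_neg hc, P.south_bump _ hc, P.east_eq, west_eq]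

lemma sig_inj (i : ℕ) : Function.Injective (sig P i) := by
  have key : ∀ a b, a < b → (i, a) ∉ P.cross → (i, b) ∉ P.cross →
      nb P i (a + 1) < nb P i (b + 1) := by
    intro a b hab ha hb
    have h1 : nb P i (a + 1) ≤ b := nb_min P i (a + 1) b (by omega) hb
    have h2 : b + 1 ≤ nb P i (b + 1) := nb_ge P i (b + 1)
    omega
  intro a b hab
  unfold sig at hab
  by_cases ha : (i, a) ∈ P.cross <;> by_cases hb : (i, b) ∈ P.cross
  · simpa [ha, hb] using hab
  · rw [if_pos ha, if_neg hb] at hab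
    exact absurd (hab ▸ ha) (nb_noncross P i (b + 1))
  · rw [if_neg ha, if_pos hb] at hab
    exact absurd (hab ▸ hb) (nb_noncross P i (a + 1))
  · rw [if_neg ha, if_neg hb] at hab
    rcases lt_trichotomy a b with h | h | h
    · exact absurd hab (ne_of_lt (key a b h ha hb))
    · exact h
    · exact absurd hab.symm (ne_of_lt (key b a h hb ha))

lemma sig_range (i : ℕ) : Set.range (sig P i) = {nb P i 0}ᶜ := by
  ext m
  simp only [Set.mem_range, Set.mem_compl_iff, Set.mem_singleton_iff]
  constructor
  · rintro ⟨j, rfl⟩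
    unfold sig
    by_cases hc : (i, j) ∈ P.cross
    · rw [if_pos hc]
      intro he
      exact nb_noncross P i 0 (he ▸ hc)
    · rw [if_neg hc]
      have h1 : nb P i 0 ≤ j := nb_min P i 0 j (Nat.zero_le j) hc
      have h2 : j + 1 ≤ nb P i (j + 1) := nb_ge P i (j + 1)
      omega
  · intro hm
    by_cases hc : (i, m) ∈ P.cross
    · exact ⟨m, by simp [sig, hc]⟩
    · have h0 : nb P i 0 ≤ m := nb_min P i 0 m (Nat.zero_le m) hc
      have h0' : nb P i 0 < m := lt_of_le_of_ne h0 (Ne.symm hm)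
      -- greatest noncross index < m
      set j := Nat.findGreatest (fun j => (i, j) ∉ P.cross) (m - 1) with hj
      have hjspec : (i, j) ∉ P.cross :=
        Nat.findGreatest_spec (P := fun j => (i, j) ∉ P.cross)
          (by omega : nb P i 0 ≤ m - 1) (nb_noncross P i 0)
      have hjle : j ≤ m - 1 := Nat.findGreatest_le (m - 1)
      have hmax : ∀ k, j < k → k ≤ m - 1 → (i, k) ∈ P.cross := by
        intro k h1 h2
        by_contra hk
        have hle := Nat.le_findGreatest (P := fun j => (i, j) ∉ P.cross) h2 hk
        rw [← hj] at hle
        omega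
      refine ⟨j, ?_⟩
      have : nb P i (j + 1) = m := by
        refine le_antisymm (nb_min P i (j + 1) m (by omega) hc) ?_
        by_contra hlt
        push_neg at hlt
        have hge := nb_ge P i (j + 1)
        exact (nb_noncross P i (j + 1)) (hmax _ (by omega) (by omega))
      simp [sig, hjspec, this]

variable {w : Equiv.Perm ℕ}

lemma row (hw : P.IsFor w) : ∀ i, Function.Injective (fun j => P.north (i, j)) ∧
    Set.range (fun j => P.north (i, j)) = (w '' Set.Iio i)ᶜ := by
  intro i
  induction i with
  | zero =>
    constructor
    · intro a b hab; simpa [P.north_top] using hab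
    · ext k
      simp [P.north_top]
  | succ i ih =>
    obtain ⟨hinj, hrange⟩ := ih
    have hns : ∀ j, P.north (i + 1, j) = P.north (i, sig P i j) := by
      intro j; rw [P.north_succ, south_eq]
    have hwi : P.north (i, nb P i 0) = w i := by
      rw [← west_eq]; exact hw i
    constructor
    · intro a b hab
      simp only [hns] at hab
      exact sig_inj P i (hinj hab)
    · have hcomp : (fun j => P.north (i + 1, j)) = (fun j => P.north (i, j)) ∘ sig P i := by
        funext j; exact hns j
      rw [hcomp, Set.range_comp, sig_range]
      have himg : (fun j => P.north (i, j)) '' {nb P i 0}ᶜ =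
          Set.range (fun j => P.north (i, j)) \ {P.north (i, nb P i 0)} := by
        ext k
        constructor
        · rintro ⟨j, hj, rfl⟩
          exact ⟨Set.mem_range_self j, fun he => hj (hinj (by simpa using he))⟩
        · rintro ⟨⟨j, rfl⟩, hk⟩
          refine ⟨j, ?_, rfl⟩
          simp only [Set.mem_compl_iff, Set.mem_singleton_iff] at *
          intro he
          exact hk (by rw [he])
      rw [himg, hrange, hwi]
      ext k
      simp only [Set.mem_diff, Set.mem_compl_iff, Set.mem_image, Set.mem_Iio,
        Set.mem_singleton_iff]
      constructor
      · rintro ⟨h1, h2⟩ ⟨a, ha, rfl⟩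
        rcases Nat.lt_or_ge a i with h | h
        · exact h1 ⟨a, h, rfl⟩
        · exact h2 (by rw [show a = i by omega])
      · intro h
        exact ⟨fun ⟨a, ha, he⟩ => h ⟨a, by omega, he⟩, fun he => h ⟨i, by omega, he.symm⟩⟩

end Aux


lemma ncard_Iio_nat (n : ℕ) : (Set.Iio n).ncard = n := by
  rw [← Finset.coe_Iio, Set.ncard_coe_finset, Nat.card_Iio]

lemma conjPart_lt_iff (l : ℕ → ℕ) (hl : Antitone l) (hsupp : (Function.support l).Finite)
    (i m : ℕ) : i < conjPart l m ↔ m < l i := by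
  have hfin : {r | m < l r}.Finite := hsupp.subset fun r hr => by
    simp only [Function.mem_support]
    intro h0
    simp only [Set.mem_setOf_eq, h0] at hr
    omega
  unfold conjPart
  constructor
  · intro h
    by_contra hlt
    push_neg at hlt
    have hsub : {r | m < l r} ⊆ Set.Iio i := by
      intro r hr
      simp only [Set.mem_setOf_eq] at hr
      simp only [Set.mem_Iio]
      by_contra hri
      push_neg at hri
      have := hl hri
      omega
    have := Set.ncard_le_ncard hsub (Set.finite_Iio i)
    rw [ncard_Iio_nat] at this
    omega
  · intro h
    have hsub : Set.Iio (i + 1) ⊆ {r | m < l r} := by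
      intro r hr
      simp only [Set.mem_Iio] at hr
      have := hl (by omega : r ≤ i)
      simp only [Set.mem_setOf_eq]
      omega
    have := Set.ncard_le_ncard hsub hfin
    rw [ncard_Iio_nat] at this
    omega

/-- for P ∈ PD(w) with w ≤_L π = dom(λ), the set P(π) of
π-dominated positions contains exactly λ_i positions in each row i. -/
theorem stmt9 (π w : Equiv.Perm ℕ) (l : ℕ → ℕ) (hπ : FinSupp π)
    (hdom : Avoids132 π) (hl : Antitone l) (hsupp : (Function.support l).Finite)
    (hD : Rothe π = yd l) (hw : leL w π)
    (P : PipeDream) (hP : P ∈ PD w) (i : ℕ) :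
    {p ∈ dominated π l w P | p.1 = i}.ncard = l i := by
  obtain ⟨hred, hfor⟩ := hP
  have hRothe : ∀ a b : ℕ, b < l a ↔ (a < π⁻¹ b ∧ b < π a) := by
    intro a b
    have := Set.ext_iff.mp hD (a, b)
    simpa [Rothe, yd] using this.symm
  set f : ℕ → ℕ := fun j => P.north (i + 1, j) with hf
  obtain ⟨hinj, hrange⟩ := Aux.row P hfor (i + 1)
  set U : Set ℕ := {k | π (w⁻¹ k) < l i} with hU
  have hsf : ∀ j, P.south (i, j) = f j := fun j => (P.north_succ i j).symm
  have hset : {p ∈ dominated π l w P | p.1 = i} =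
      (fun j => ((i, j) : ℕ × ℕ)) '' (f ⁻¹' U) := by
    ext ⟨a, b⟩
    simp only [dominated, Set.mem_setOf_eq, Set.mem_image, Set.mem_preimage, hU]
    constructor
    · rintro ⟨hdom', rfl⟩
      refine ⟨b, ?_, rfl⟩
      rw [← hsf b]
      exact (conjPart_lt_iff l hl hsupp a _).mp hdom'
    · rintro ⟨j, hj, he⟩
      obtain ⟨rfl, rfl⟩ : i = a ∧ j = b := Prod.mk.injEq .. ▸ he
      rw [← hsf j] at hj
      exact ⟨(conjPart_lt_iff l hl hsupp i _).mpr hj, rfl⟩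
  rw [hset, Set.ncard_image_of_injective _ (fun a b h => by simpa using h : 
    Function.Injective (fun j => ((i, j) : ℕ × ℕ)))]
  rw [show (f ⁻¹' U).ncard = (f '' (f ⁻¹' U)).ncard from
    (Set.ncard_image_of_injective _ hinj).symm]
  rw [Set.image_preimage_eq_inter_range, hrange]
  have h2 : U ∩ (⇑w '' Set.Iio (i + 1))ᶜ = ⇑w '' (⇑π ⁻¹' Set.Iio (l i)) := by
    ext k
    simp only [hU, Set.mem_inter_iff, Set.mem_setOf_eq, Set.mem_compl_iff, Set.mem_image,
      Set.mem_preimage, Set.mem_Iio]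
    constructor
    · rintro ⟨h1', h2'⟩
      exact ⟨w⁻¹ k, h1', w.apply_symm_apply k⟩
    · rintro ⟨m, hm, rfl⟩
      have hwm : w⁻¹ (w m) = m := w.symm_apply_apply m
      refine ⟨by rw [hwm]; exact hm, ?_⟩
      rintro ⟨a, ha, hae⟩
      have ham : a = m := w.injective hae
      have him : i < π⁻¹ (π m) := ((hRothe i (π m)).mp hm).1
      rw [show π⁻¹ (π m) = m from π.symm_apply_apply m] at him
      omega
  rw [h2, Set.ncard_image_of_injective _ w.injective,
    ← Equiv.image_symm_eq_preimage, Set.ncard_image_of_injective _ π.symm.injective,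
    ncard_Iio_nat]
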